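/- The 2×2 matrix polynomial P(λ) = [[1, λ],[λ, λ²+1]] has constant determinant 1 (hence is stable with respect to any set D ⊆ ℂ), but P is not hyperstable with respect to the closed unit disc: for x = (0,1)ᵀ and every nonzero y ∈ ℂ², the scalar polynomial λ ↦ y*P(λ)x has a root in the closed unit disc. -/

import Mathlib

theorem stmt1 :
    (∀ μ : ℂ, (!![1, μ; μ, μ ^ 2 + 1] : Matrix (Fin 2) (Fin 2) ℂ).det = 1) ∧
    (∀ y : Fin 2 → ℂ, y ≠ 0 → ∃ μ : ℂ, ‖μ‖ ≤ 1 ∧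
      dotProduct (star y)
        ((!![1, μ; μ, μ ^ 2 + 1] : Matrix (Fin 2) (Fin 2) ℂ).mulVec ![0, 1]) = 0) := by
  constructor
  · intro μ
    simp [Matrix.det_fin_two]
    ring
  · intro y hy
    by_cases h1 : y 1 = 0
    · refine ⟨0, by simp, ?_⟩
      simp [dotProduct, Matrix.mulVec, Fin.sum_univ_two, h1]
    · have h1' : (starRingEnd ℂ) (y 1) ≠ 0 := star_ne_zero.mpr h1
      set c : ℂ := (starRingEnd ℂ) (y 0) / (starRingEnd ℂ) (y 1) with hc
      obtain ⟨s, hs⟩ := IsAlgClosed.exists_pow_nat_eq (c ^ 2 - 4) (n := 2) (by norm_num)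
      set r : ℂ := (-c + s) / 2 with hrdef
      set r' : ℂ := (-c - s) / 2 with hr'def
      have hcy : (starRingEnd ℂ) (y 1) * c = (starRingEnd ℂ) (y 0) := by
        rw [hc, mul_div_cancel₀ _ h1']
      have hr : r ^ 2 + c * r + 1 = 0 := by
        rw [hrdef]; linear_combination hs / 4
      have hr' : r' ^ 2 + c * r' + 1 = 0 := by
        rw [hr'def]; linear_combination hs / 4
      have hprod : r * r' = 1 := by
        rw [hrdef, hr'def]; linear_combination -hs / 4
      have key : ∀ μ : ℂ, μ ^ 2 + c * μ + 1 = 0 →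
          dotProduct (star y)
            ((!![1, μ; μ, μ ^ 2 + 1] : Matrix (Fin 2) (Fin 2) ℂ).mulVec ![0, 1]) = 0 := by
        intro μ hμ
        have : dotProduct (star y)
            ((!![1, μ; μ, μ ^ 2 + 1] : Matrix (Fin 2) (Fin 2) ℂ).mulVec ![0, 1])
            = star (y 1) * (μ ^ 2 + c * μ + 1) := by
          simp [dotProduct, Matrix.mulVec, Fin.sum_univ_two]
          have h3 : (starRingEnd ℂ) (y 1) * ((starRingEnd ℂ) (y 1))⁻¹ = 1 :=
            mul_inv_cancel₀ h1'
          linear_combination μ * hcy - 2 * (starRingEnd ℂ) (y 0) * μ * h3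
        rw [this, hμ, mul_zero]
      by_cases habs : ‖r‖ ≤ 1
      · exact ⟨r, habs, key r hr⟩
      · refine ⟨r', ?_, key r' hr'⟩
        have h2 : ‖r‖ * ‖r'‖ = 1 := by
          rw [← norm_mul, hprod, norm_one]
        push_neg at habs
        nlinarith [norm_nonneg r']
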